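/- arXiv:1703.06974 — 3 statements merged into one kernel-verified Lean document; each statement's English description precedes it below -/
import Mathlib

section
/- Let S be a commutative ring, I an ideal, and let M, M' be free S-modules with adapted filtrations Fil¹M = (⊕_{i≤d₁} S e_i) ⊕ (⊕_{i>d₁} I e_i) and Fil¹M' = (⊕_{j≤ν₁} S w_j) ⊕ (⊕_{j>ν₁} I w_j). Define Fil¹(M⊗M') = im(Fil¹M ⊗ M' + M ⊗ Fil¹M') ⊆ M⊗M'. Then an element e = Σ s_{ij} e_i⊗w_j lies in Fil¹(M⊗M') if and only if s_{ij} ∈ I for all pairs (i,j) with i > d₁ and j > ν₁. -/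
/-!
STATEMENT 6: Let `S` be a commutative ring, `I` an ideal (playing the role of `Fil¹S`), and
`M`, `M'` free `S`-modules with adapted filtrations
`Fil¹M = (⊕_{i≤d₁} S e_i) ⊕ (⊕_{i>d₁} I e_i)` and
`Fil¹M' = (⊕_{j≤ν₁} S w_j) ⊕ (⊕_{j>ν₁} I w_j)`
(realized as `span{e_i : i < d₁} + I·M`, resp. `span{w_j : j < ν₁} + I·M'`).  With
`Fil¹(M⊗M') = im(Fil¹M ⊗ M' + M ⊗ Fil¹M') ⊆ M⊗M'`, an element `e = Σ s_{ij} e_i⊗w_j` lies in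
`Fil¹(M⊗M')` iff `s_{ij} ∈ I` for all pairs `(i,j)` with `i > d₁` and `j > ν₁`.
-/

open TensorProduct

/-- Coordinates of elements of `span{e_i : i < d₁} ⊔ I•⊤` at indices `≥ d₁` lie in `I`. -/
lemma stmt6_aux (S : Type*) [CommRing S] (I : Ideal S)
    (M : Type*) [AddCommGroup M] [Module S M]
    (d d₁ : ℕ) (e : Module.Basis (Fin d) S M) (i : Fin d) (hi : d₁ ≤ (i : ℕ)) :
    Submodule.span S (Set.range fun k : {k : Fin d // (k : ℕ) < d₁} => e k.1)
        ⊔ I • (⊤ : Submodule S M) ≤ Submodule.comap (e.coord i) I := by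
  apply sup_le
  · rw [Submodule.span_le]
    rintro _ ⟨⟨k, hk⟩, rfl⟩
    have hne : k ≠ i := by
      intro h; subst h; omega
    simp [Submodule.mem_comap, Module.Basis.coord_apply, Finsupp.single_apply, hne]
  · rw [Submodule.smul_le]
    intro r hr m _
    simp only [Submodule.mem_comap, map_smul, smul_eq_mul]
    exact I.mul_mem_right _ hr

theorem stmt6 (S : Type*) [CommRing S] (I : Ideal S)
    (M M' : Type*) [AddCommGroup M] [Module S M] [AddCommGroup M'] [Module S M']
    (d ν d₁ ν₁ : ℕ) (e : Module.Basis (Fin d) S M) (w : Module.Basis (Fin ν) S M')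
    (F1 : Submodule S M) (F1' : Submodule S M') (F12 : Submodule S (M ⊗[S] M'))
    (hF1 : F1 = Submodule.span S (Set.range fun i : {i : Fin d // (i : ℕ) < d₁} => e i.1)
        ⊔ I • (⊤ : Submodule S M))
    (hF1' : F1' = Submodule.span S (Set.range fun j : {j : Fin ν // (j : ℕ) < ν₁} => w j.1)
        ⊔ I • (⊤ : Submodule S M'))
    (hF12 : F12 = Submodule.map₂ (TensorProduct.mk S M M') F1 ⊤
        ⊔ Submodule.map₂ (TensorProduct.mk S M M') ⊤ F1') :
    ∀ s : Fin d → Fin ν → S,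
      (∑ i : Fin d, ∑ j : Fin ν, s i j • (e i ⊗ₜ[S] w j)) ∈ F12 ↔
        ∀ (i : Fin d) (j : Fin ν), d₁ ≤ (i : ℕ) → ν₁ ≤ (j : ℕ) → s i j ∈ I := by
  intro s
  constructor
  · intro hmem i j hi hj
    set b := e.tensorProduct w with hb
    -- forward: F12 ≤ comap (b.coord (i,j)) I
    have hle : F12 ≤ Submodule.comap (b.coord (i, j)) I := by
      rw [hF12]
      apply sup_le
      · rw [Submodule.map₂_le]
        intro m hm n _
        have h1 : e.repr m i ∈ I := stmt6_aux S I M d d₁ e i hi (hF1 ▸ hm)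
        simp only [Submodule.mem_comap, TensorProduct.mk_apply, Module.Basis.coord_apply, hb,
          Module.Basis.tensorProduct_repr_tmul_apply]
        exact I.mul_mem_left _ h1
      · rw [Submodule.map₂_le]
        intro m _ n hn
        have h1 : w.repr n j ∈ I := stmt6_aux S I M' ν ν₁ w j hj (hF1' ▸ hn)
        simp only [Submodule.mem_comap, TensorProduct.mk_apply, Module.Basis.coord_apply, hb,
          Module.Basis.tensorProduct_repr_tmul_apply]
        exact I.mul_mem_right _ h1
    have := hle hmem
    simp only [Submodule.mem_comap, Module.Basis.coord_apply, map_sum, map_smul, hb,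
      Module.Basis.tensorProduct_repr_tmul_apply, Module.Basis.repr_self, Finsupp.coe_finset_sum,
      Finsupp.coe_smul, Finset.sum_apply, Pi.smul_apply, Finsupp.single_apply,
      smul_eq_mul] at this
    convert this using 1
    rw [Finset.sum_eq_single i, Finset.sum_eq_single j] <;>
      simp +contextual [Finsupp.single_apply, Ne.symm, eq_comm]
  · intro hs
    apply Submodule.sum_mem
    intro i _
    apply Submodule.sum_mem
    intro j _
    rw [hF12]
    by_cases hi : (i : ℕ) < d₁
    · apply Submodule.mem_sup_left
      rw [show s i j • (e i ⊗ₜ[S] w j) = (s i j • e i) ⊗ₜ[S] w j by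
        rw [TensorProduct.smul_tmul']]
      apply Submodule.apply_mem_map₂
      · rw [hF1]
        exact Submodule.smul_mem _ _ (Submodule.mem_sup_left
          (Submodule.subset_span ⟨⟨i, hi⟩, rfl⟩))
      · trivial
    · by_cases hj : (j : ℕ) < ν₁
      · apply Submodule.mem_sup_right
        rw [show s i j • (e i ⊗ₜ[S] w j) = e i ⊗ₜ[S] (s i j • w j) by
          rw [TensorProduct.tmul_smul]]
        apply Submodule.apply_mem_map₂
        · trivial
        · rw [hF1']
          exact Submodule.smul_mem _ _ (Submodule.mem_sup_left
            (Submodule.subset_span ⟨⟨j, hj⟩, rfl⟩))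
      · apply Submodule.mem_sup_left
        rw [show s i j • (e i ⊗ₜ[S] w j) = (s i j • e i) ⊗ₜ[S] w j by
          rw [TensorProduct.smul_tmul']]
        apply Submodule.apply_mem_map₂
        · rw [hF1]
          exact Submodule.mem_sup_right
            (Submodule.smul_mem_smul (hs i j (le_of_not_gt hi) (le_of_not_gt hj))
              Submodule.mem_top)
        · trivial
end

section
/- Let p be a prime, K a finite extension of ℚ_p, W the Witt vectors of its residue field, E(u) ∈ W[u] an Eisenstein polynomial of degree e, and S the p-adic completion of the divided power envelope of W[u] with respect to (E(u)). Then the unique continuous σ-semilinear ring endomorphism φ of S with φ(u) = u^p satisfies φ(E(u)) ∈ pS, i.e., the element c := φ(E(u))/p is a well-defined element of S, and c is a unit in S. -/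
/-!
STATEMENT 8: Let `p` be a prime, `K` a finite extension of `ℚ_p`, `W` the Witt vectors of its
residue field, `E(u) ∈ W[u]` an Eisenstein polynomial of degree `e` (the minimal polynomial of a
uniformizer `π`), and `S = W[[u]]^{PD}` the `p`-adic completion of the divided power envelope of
`W[u]` with respect to `(E(u))`.  Then the unique continuous `σ`-semilinear ring endomorphism
`φ` of `S` with `φ(u) = u^p` satisfies `φ(E(u)) ∈ pS`, i.e. `c := φ(E(u))/p` is a well-defined
element of `S` (well-defined since `p` is a nonzerodivisor in `S`), and `c` is a unit of `S`.

We present the Breuil ring `S` through its characteristic interface: `S` is a `p`-adically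
complete local ring receiving `W`, with a distinguished element `u`, divided powers
`γ n = E(u)ⁿ/n!`, and the Frobenius `φ` acting as `σ` on `W` and as `u ↦ u^p`.
-/


/-- `p^k * k!` divides `(p*k)!`. -/
lemma stmt8_aux_pow_mul_factorial_dvd (p : ℕ) (hp : 0 < p) :
    ∀ k : ℕ, p ^ k * k.factorial ∣ (p * k).factorial
  | 0 => by simp
  | (k + 1) => by
    have IH := stmt8_aux_pow_mul_factorial_dvd p hp k
    have h1 : p * (k + 1) = (p * k + (p - 1)) + 1 := by rw [Nat.mul_succ]; omega
    have h2 : (p * k).factorial ∣ (p * k + (p - 1)).factorial :=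
      Nat.factorial_dvd_factorial (by omega)
    calc p ^ (k + 1) * (k + 1).factorial
        = (p ^ k * k.factorial) * (p * (k + 1)) := by
          rw [pow_succ, Nat.factorial_succ]; ring
      _ ∣ (p * k).factorial * (p * (k + 1)) := mul_dvd_mul IH dvd_rfl
      _ ∣ (p * (k + 1)).factorial := by
          rw [h1, Nat.factorial_succ, mul_comm ((p * k).factorial)]
          exact mul_dvd_mul (dvd_of_eq (by omega)) h2

/-- A natural number not divisible by `p` is a unit in `S`. -/
lemma stmt8_aux_unit {p : ℕ} (hp : p.Prime) {S : Type*} [CommRing S] [IsLocalRing S]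
    (hpmem : (p : S) ∈ IsLocalRing.maximalIdeal S) {n : ℕ} (h : ¬ p ∣ n) :
    IsUnit (n : S) := by
  have hcop : Nat.gcd p n = 1 := (Nat.Prime.coprime_iff_not_dvd hp).mpr h
  have hbez := Nat.gcd_eq_gcd_ab p n
  rw [hcop] at hbez
  have hS : (1 : S) = (p : S) * ((Nat.gcdA p n : ℤ) : S) + (n : S) * ((Nat.gcdB p n : ℤ) : S) := by
    have := congrArg (fun z : ℤ => ((z : ℤ) : S)) hbez
    push_cast at this
    simpa using this
  have hunit : IsUnit ((n : S) * ((Nat.gcdB p n : ℤ) : S)) := by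
    by_contra hnu
    have h1 : (n : S) * ((Nat.gcdB p n : ℤ) : S) ∈ IsLocalRing.maximalIdeal S :=
      (IsLocalRing.mem_maximalIdeal _).mpr hnu
    have h2 : (1 : S) ∈ IsLocalRing.maximalIdeal S := by
      rw [hS]
      exact Ideal.add_mem _ (Ideal.mul_mem_right _ _ hpmem) h1
    exact (IsLocalRing.maximalIdeal.isMaximal S).ne_top
      (Ideal.eq_top_of_isUnit_mem _ h2 isUnit_one)
  exact isUnit_of_mul_isUnit_left hunit

theorem stmt8 (p : ℕ) [Fact p.Prime]
    (W : Type*) [CommRing W] (σ : W →+* W)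
    (E : Polynomial W) (eK : ℕ) (hmonic : E.Monic) (hdeg : E.natDegree = eK) (he : 0 < eK)
    -- Eisenstein: all lower coefficients divisible by p, constant term p·(unit)
    (hEis : ∀ i < eK, E.coeff i ∈ Ideal.span {(p : W)})
    (a₀ : W) (ha₀ : E.coeff 0 = p * a₀) (ha₀unit : IsUnit a₀)
    (S : Type*) [CommRing S] (ιS : W →+* S) (u : S)
    (φ : S →+* S)
    (hφW : ∀ x : W, φ (ιS x) = ιS (σ x))
    (hφu : φ u = u ^ p)
    -- divided powers of E(u) in S
    (γ : ℕ → S) (hγ : ∀ n : ℕ, (n.factorial : S) * γ n = (Polynomial.eval₂ ιS u E) ^ n)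
    (hγ1 : γ 1 = Polynomial.eval₂ ιS u E)
    -- p-adic completeness and p-torsion-freeness of S
    (hcomp : IsAdicComplete (Ideal.span {(p : S)}) S)
    (hreg : ∀ x : S, (p : S) * x = 0 → x = 0)
    -- S is local, with p and u in the maximal ideal, and W-units map to units
    [IsLocalRing S]
    (hpmem : (p : S) ∈ IsLocalRing.maximalIdeal S)
    (humem : u ∈ IsLocalRing.maximalIdeal S)
    (hιunit : ∀ x : W, IsUnit x → IsUnit (ιS x)) :
    ∃ c : S, (p : S) * c = φ (Polynomial.eval₂ ιS u E) ∧ IsUnit c ∧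
      ∀ c' : S, (p : S) * c' = φ (Polynomial.eval₂ ιS u E) → c' = c := by
  have hp : p.Prime := Fact.out
  have hp0 : 0 < p := hp.pos
  have hp2 : 2 ≤ p := hp.two_le
  set F : S := Polynomial.eval₂ ιS u E with hF
  -- (p-1)! is not divisible by p, hence a unit in S
  have hnotdvd : ¬ p ∣ (p - 1).factorial := by
    intro h
    have := (Nat.Prime.dvd_factorial hp).mp h
    omega
  have hfacunit : IsUnit (((p - 1).factorial : ℕ) : S) := stmt8_aux_unit hp hpmem hnotdvd
  -- p! = p * (p-1)! in S
  have hfacS : ((p.factorial : ℕ) : S) = (p : S) * (((p - 1).factorial : ℕ) : S) := by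
    rw [← Nat.cast_mul, Nat.mul_factorial_pred hp0.ne']
  -- cancellation by p!
  have hfacreg : ∀ x : S, ((p.factorial : ℕ) : S) * x = 0 → x = 0 := by
    intro x hx
    rw [hfacS, mul_assoc] at hx
    have := hreg _ hx
    exact (IsUnit.mul_right_eq_zero hfacunit).mp this
  have hfacpowreg : ∀ n : ℕ, ∀ x : S, ((p.factorial : ℕ) : S) ^ n * x = 0 → x = 0 := by
    intro n
    induction n with
    | zero => intro x hx; simpa using hx
    | succ n ih =>
      intro x hx
      rw [pow_succ, mul_assoc] at hx
      exact (IsUnit.mul_right_eq_zero hfacunit).mp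
        (hreg _ (by rw [← mul_assoc, ← hfacS]; exact ih _ (by rw [← mul_assoc] at hx ⊢; exact hx)))
  -- Step A : F = u^eK + p * A
  have hev : F = ∑ i ∈ Finset.range (eK + 1), ιS (E.coeff i) * u ^ i := by
    rw [hF]
    exact Polynomial.eval₂_eq_sum_range' ιS (by rw [hdeg]; exact Nat.lt_succ_self _) u
  have htop : E.coeff eK = 1 := by rw [← hdeg]; exact hmonic.coeff_natDegree
  have hmemA : ∑ i ∈ Finset.range eK, ιS (E.coeff i) * u ^ i ∈ Ideal.span {(p : S)} := by
    refine Ideal.sum_mem _ fun i hi => ?_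
    obtain ⟨b, hb⟩ := Ideal.mem_span_singleton.mp (hEis i (Finset.mem_range.mp hi))
    exact Ideal.mem_span_singleton.mpr ⟨ιS b * u ^ i, by rw [hb, map_mul, map_natCast]; ring⟩
  obtain ⟨A, hA⟩ := Ideal.mem_span_singleton.mp hmemA
  have hFA : F = u ^ eK + (p : S) * A := by
    rw [hev, Finset.sum_range_succ, htop, map_one, one_mul, hA]; ring
  -- Step B : φ F = u^{p·eK} + p·ιS(σ a₀) + (p·u)·B'
  obtain ⟨m', hm'⟩ : ∃ m', eK = m' + 1 := ⟨eK - 1, by omega⟩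
  have hφF : φ F = ∑ i ∈ Finset.range (eK + 1), ιS (σ (E.coeff i)) * (u ^ p) ^ i := by
    rw [hF, Polynomial.hom_eval₂, hφu,
      Polynomial.eval₂_eq_sum_range' (φ.comp ιS) (by rw [hdeg]; exact Nat.lt_succ_self _) (u ^ p)]
    exact Finset.sum_congr rfl fun i _ => by rw [RingHom.comp_apply, hφW]
  have hupow : u ^ p = u ^ (p - 1) * u := by
    conv_lhs => rw [show p = (p - 1) + 1 by omega]
    rw [pow_succ]
  have hmemB : ∑ i ∈ Finset.range m', ιS (σ (E.coeff (i + 1))) * (u ^ p) ^ (i + 1)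
      ∈ Ideal.span {(p : S) * u} := by
    refine Ideal.sum_mem _ fun i hi => ?_
    obtain ⟨b, hb⟩ := Ideal.mem_span_singleton.mp (hEis (i + 1) (by
      have := Finset.mem_range.mp hi; omega))
    refine Ideal.mem_span_singleton.mpr ⟨ιS (σ b) * (u ^ (p - 1) * (u ^ p) ^ i), ?_⟩
    rw [hb, map_mul, map_natCast, map_mul, map_natCast, pow_succ, hupow]
    ring
  obtain ⟨B', hB'⟩ := Ideal.mem_span_singleton.mp hmemB
  have hG : φ F = (u ^ p) ^ eK + (p : S) * ιS (σ a₀) + ((p : S) * u) * B' := by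
    rw [hφF, Finset.sum_range_succ, htop, map_one, map_one, one_mul]
    rw [hm', Finset.sum_range_succ', hB']
    have h0 : ιS (σ (E.coeff 0)) * (u ^ p) ^ 0 = (p : S) * ιS (σ a₀) := by
      rw [ha₀, map_mul, map_natCast, map_mul, map_natCast, pow_zero, mul_one]
    rw [h0, ← hm']
    ring
  -- Step C : γ p ∈ maximal ideal
  obtain ⟨Q, hQ⟩ : (p.factorial) ^ p ∣ (p * p).factorial := by
    have h := Nat.prod_factorial_dvd_factorial_sum (Finset.range p) (fun _ => p)
    simpa [Finset.prod_const, Finset.sum_const, Finset.card_range, smul_eq_mul] using h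
  have hppdvd : p ^ (p + 1) ∣ (p * p).factorial := by
    have h := stmt8_aux_pow_mul_factorial_dvd p hp0 p
    have : p ^ p * p ∣ p ^ p * p.factorial := mul_dvd_mul_left _ (Nat.dvd_factorial hp0 le_rfl)
    calc p ^ (p + 1) = p ^ p * p := by rw [pow_succ]
      _ ∣ p ^ p * p.factorial := this
      _ ∣ (p * p).factorial := h
  have hpQ : p ∣ Q := by
    rw [hQ] at hppdvd
    have hfac : p.factorial = p * (p - 1).factorial := (Nat.mul_factorial_pred hp0.ne').symm
    rw [hfac, mul_pow, pow_succ, mul_assoc] at hppdvd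
    have h2 : p ∣ (p - 1).factorial ^ p * Q :=
      (mul_dvd_mul_iff_left (pow_ne_zero p hp.ne_zero)).mp hppdvd
    rcases (Nat.Prime.dvd_mul hp).mp h2 with h3 | h3
    · exact absurd (hp.dvd_of_dvd_pow h3) hnotdvd
    · exact h3
  obtain ⟨M, hM⟩ := hpQ
  have hkey : (p : S) * ((M : S) * γ (p ^ 2)) = γ p ^ p := by
    have e1 : ((p.factorial : ℕ) : S) ^ p * ((p : S) * ((M : S) * γ (p ^ 2)) - γ p ^ p) = 0 := by
      have h1 : ((p ^ 2).factorial : S) * γ (p ^ 2) = F ^ p ^ 2 := hγ (p ^ 2)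
      have h2 : ((p.factorial : ℕ) : S) * γ p = F ^ p := hγ p
      have hcast : (((p ^ 2).factorial : ℕ) : S)
          = ((p.factorial : ℕ) : S) ^ p * ((p : S) * (M : S)) := by
        have : (p ^ 2).factorial = p.factorial ^ p * (p * M) := by
          rw [← hM, ← hQ, sq]
        rw [this]; push_cast; ring
      have h3 : F ^ p ^ 2 = (F ^ p) ^ p := by rw [← pow_mul, sq]
      have h4 : (F ^ p) ^ p = ((p.factorial : ℕ) : S) ^ p * γ p ^ p := by
        rw [← h2, mul_pow]
      rw [mul_sub]
      rw [show ((p.factorial : ℕ) : S) ^ p * ((p : S) * ((M : S) * γ (p ^ 2)))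
          = (((p.factorial : ℕ) : S) ^ p * ((p : S) * (M : S))) * γ (p ^ 2) by ring, ← hcast,
        h1, h3, h4]
      ring
    have := hfacpowreg p _ e1
    exact sub_eq_zero.mp this
  have hγp_mem : γ p ∈ IsLocalRing.maximalIdeal S := by
    have hprime : (IsLocalRing.maximalIdeal S).IsPrime :=
      (IsLocalRing.maximalIdeal.isMaximal S).isPrime
    refine hprime.mem_of_pow_mem p ?_
    rw [← hkey]
    exact Ideal.mul_mem_right _ _ hpmem
  -- Step D : u^{p·eK} = p * v  with v ∈ maximal ideal
  have hdvdD : ((p : S)) ^ 2 ∣ F ^ p - (u ^ eK) ^ p := by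
    have h := dvd_sub_pow_of_dvd_sub (p := p) (a := F) (b := u ^ eK)
      (⟨A, by rw [hFA]; ring⟩) 1
    simpa using h
  obtain ⟨D, hD⟩ := hdvdD
  -- the candidate c
  set v : S := (((p - 1).factorial : ℕ) : S) * γ p - (p : S) * D + u * B' with hv
  have hpc : (p : S) * (ιS (σ a₀) + v) = φ F := by
    have hFp : F ^ p = (p : S) * ((((p - 1).factorial : ℕ) : S) * γ p) := by
      rw [← hγ p, hfacS]; ring
    have hue : (u ^ eK) ^ p = (u ^ p) ^ eK := by rw [← pow_mul, ← pow_mul, mul_comm]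
    rw [hG]
    have : (u ^ p) ^ eK = (p : S) * ((((p - 1).factorial : ℕ) : S) * γ p) - (p : S) ^ 2 * D := by
      rw [← hFp, ← hue]
      linear_combination -hD
    rw [this]; ring
  refine ⟨ιS (σ a₀) + v, hpc, ?_, ?_⟩
  · -- c is a unit
    have hvmem : v ∈ IsLocalRing.maximalIdeal S := by
      refine Ideal.add_mem _ (Ideal.sub_mem _ ?_ ?_) ?_
      · exact Ideal.mul_mem_left _ _ hγp_mem
      · exact Ideal.mul_mem_right _ _ hpmem
      · exact Ideal.mul_mem_right _ _ humem
    have haunit : IsUnit (ιS (σ a₀)) := hιunit _ (ha₀unit.map σ)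
    by_contra hnu
    have hc : ιS (σ a₀) + v ∈ IsLocalRing.maximalIdeal S :=
      (IsLocalRing.mem_maximalIdeal _).mpr hnu
    have : ιS (σ a₀) ∈ IsLocalRing.maximalIdeal S := by
      have := Ideal.sub_mem _ hc hvmem
      simpa using this
    exact (IsLocalRing.mem_maximalIdeal _).mp this haunit
  · -- uniqueness
    intro c' hc'
    have : (p : S) * (c' - (ιS (σ a₀) + v)) = 0 := by
      rw [mul_sub, hc', hpc, sub_self]
    exact sub_eq_zero.mp (hreg _ this)
end

section
/- Let S be a commutative ring with an ideal I and a ring endomorphism φ with φ(I) ⊆ pS, and let M, M' be filtered free modules of weight one over S with divided Frobenii φ₁. Suppose e ∈ Fil¹(M⊗M') satisfies φ₁(e) = e, where φ₁ on Fil¹(M⊗M') is defined using the Frobenius structures on M and M'. Then the associated map F_e : M* → M' commutes with the divided Frobenii, i.e., φ₁ ∘ F_e = F_e ∘ φ₁* on Fil¹(M*), where φ₁* is the dual Frobenius defined by φ₁*(f)(φ₁(E(u)^{r_i}e_i)) = φ₁(f(E(u)^{r_i}e_i)). -/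
/-!
STATEMENT 17 (Claim 1 of the appendix): Let `S` be a commutative ring with an ideal
`I = Fil¹S` and Frobenius `φ` with `φ(I) ⊆ pS` (divided Frobenius `φ₁ = φ/p` on `I`), let
`E = E(u) ∈ I` and `c = φ₁(E) ∈ Sˣ`, and let `M`, `M'` be filtered free Breuil modules of
weight one over `S` with adapted bases `{e_i}` (split at `d₁`) and `{w_j}` (split at `ν₁`)
and divided Frobenii `φ₁`.  Suppose `e ∈ Fil¹(M⊗M')` satisfies `φ₁(e) = e`, where `φ₁` on
`Fil¹(M⊗M')` is defined through the Frobenius structures of `M` and `M'`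
(`φ₁(x⊗y) = φ₁(x)⊗φ₀(y)` for `x ∈ Fil¹M`, `φ₁(x⊗y) = φ₀(x)⊗φ₁(y)` for `y ∈ Fil¹M'`, with
`φ₀(z) = c⁻¹φ₁(E·z)`).  Then the associated map `F_e : M* → M'` commutes with the divided
Frobenii: `φ₁ ∘ F_e = F_e ∘ φ₁*` on `Fil¹(M*)`, where the dual Frobenius `φ₁*` is defined by
`φ₁*(f)(φ₁(E^{n_i}e_i)) = φ₁(f(E^{n_i}e_i))` on the new basis `x_i = φ₁(E^{n_i}e_i)`.
-/

open TensorProduct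

theorem stmt17 (p : ℕ) [Fact p.Prime]
    (S : Type*) [CommRing S] (I : Ideal S)
    (φS : S →+* S) (φ1S : S → S) (hφ1S : ∀ s ∈ I, (p : S) * φ1S s = φS s)
    (E : S) (hE : E ∈ I) (c : Sˣ) (hc : (c : S) = φ1S E)
    (M M' : Type*) [AddCommGroup M] [Module S M] [AddCommGroup M'] [Module S M']
    (d ν d₁ ν₁ : ℕ) (e : Module.Basis (Fin d) S M) (w : Module.Basis (Fin ν) S M')
    (ni : Fin d → ℕ) (hni : ∀ i, ni i = if (i : ℕ) < d₁ then 0 else 1)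
    (mj : Fin ν → ℕ) (hmj : ∀ j, mj j = if (j : ℕ) < ν₁ then 0 else 1)
    -- the filtrations, as in the adapted-basis description:
    (F1 : Submodule S M) (F1' : Submodule S M') (F12 : Submodule S (M ⊗[S] M'))
    (hF1 : F1 = Submodule.span S (Set.range fun i : {i : Fin d // (i : ℕ) < d₁} => e i.1)
        ⊔ I • (⊤ : Submodule S M))
    (hF1' : F1' = Submodule.span S (Set.range fun j : {j : Fin ν // (j : ℕ) < ν₁} => w j.1)
        ⊔ I • (⊤ : Submodule S M'))
    (hF12 : F12 = Submodule.map₂ (TensorProduct.mk S M M') F1 ⊤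
        ⊔ Submodule.map₂ (TensorProduct.mk S M M') ⊤ F1')
    -- divided Frobenii on M and M':
    (φ1M : M → M) (φ1M' : M' → M')
    (hφ1Madd : ∀ x y : M, φ1M (x + y) = φ1M x + φ1M y)
    (hφ1M'add : ∀ x y : M', φ1M' (x + y) = φ1M' x + φ1M' y)
    (hφ1Msemi : ∀ (s : S), ∀ x ∈ F1, φ1M (s • x) = φS s • φ1M x)
    (hφ1M'semi : ∀ (s : S), ∀ x ∈ F1', φ1M' (s • x) = φS s • φ1M' x)
    (hφ1Mdiv : ∀ s ∈ I, ∀ x : M, φ1M (s • x) = φ1S s • (c⁻¹ : Sˣ) • φ1M (E • x))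
    (hφ1M'div : ∀ s ∈ I, ∀ x : M', φ1M' (s • x) = φ1S s • (c⁻¹ : Sˣ) • φ1M' (E • x))
    -- the images of the adapted basis form new bases (strong divisibility):
    (bx : Module.Basis (Fin d) S M) (hbx : ∀ i, bx i = φ1M ((E ^ ni i) • e i))
    (by' : Module.Basis (Fin ν) S M') (hby : ∀ j, by' j = φ1M' ((E ^ mj j) • w j))
    -- the divided Frobenius on Fil¹(M ⊗ M'):
    (φ1T : (M ⊗[S] M') → (M ⊗[S] M'))
    (hφ1Tadd : ∀ x y : M ⊗[S] M', φ1T (x + y) = φ1T x + φ1T y)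
    (hφ1T₁ : ∀ (x : M) (y : M'), x ∈ F1 →
      φ1T (x ⊗ₜ[S] y) = φ1M x ⊗ₜ[S] ((c⁻¹ : Sˣ) • φ1M' (E • y)))
    (hφ1T₂ : ∀ (x : M) (y : M'), y ∈ F1' →
      φ1T (x ⊗ₜ[S] y) = ((c⁻¹ : Sˣ) • φ1M (E • x)) ⊗ₜ[S] φ1M' y)
    -- the fixed element e ∈ Fil¹(M ⊗ M') with φ₁(e) = e:
    (eE : M ⊗[S] M') (heE : eE ∈ F12) (hfix : φ1T eE = eE)
    -- the associated map F_e (as in the tensor-hom lemma):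
    (Fe : Module.Dual S M →ₗ[S] M')
    (hFe : Fe = ∑ q : Fin d × Fin ν, ((e.tensorProduct w).repr eE q) •
      (LinearMap.smulRight (LinearMap.applyₗ (e q.1) : Module.Dual S M →ₗ[S] S) (w q.2)))
    -- the dual Frobenius φ₁* on Fil¹(M*):
    (φ1star : Module.Dual S M → Module.Dual S M)
    (hstar : ∀ (f : Module.Dual S M) (i : Fin d),
      (φ1star f) (bx i) = φ1S ((E ^ ni i) * f (e i))) :
    ∀ f : Module.Dual S M, (∀ y ∈ F1, f y ∈ I) → φ1M' (Fe f) = Fe (φ1star f) := by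
    classical
  intro f hf
  -- basic memberships
  have heF1 : ∀ i : Fin d, (i : ℕ) < d₁ → e i ∈ F1 := by
    intro i hi; rw [hF1]
    exact Submodule.mem_sup_left (Submodule.subset_span ⟨⟨i, hi⟩, rfl⟩)
  have hwF1' : ∀ j : Fin ν, (j : ℕ) < ν₁ → w j ∈ F1' := by
    intro j hj; rw [hF1']
    exact Submodule.mem_sup_left (Submodule.subset_span ⟨⟨j, hj⟩, rfl⟩)
  have hIF1 : ∀ s ∈ I, ∀ x : M, s • x ∈ F1 := by
    intro s hs x; rw [hF1]
    exact Submodule.mem_sup_right (Submodule.smul_mem_smul hs Submodule.mem_top)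
  have hIF1' : ∀ s ∈ I, ∀ y : M', s • y ∈ F1' := by
    intro s hs y; rw [hF1']
    exact Submodule.mem_sup_right (Submodule.smul_mem_smul hs Submodule.mem_top)
  have hEF1 : ∀ x : M, E • x ∈ F1 := fun x => hIF1 E hE x
  have hEF1' : ∀ y : M', E • y ∈ F1' := fun y => hIF1' E hE y
  have hfI : ∀ i : Fin d, (i : ℕ) < d₁ → f (e i) ∈ I := fun i hi => hf _ (heF1 i hi)
  -- zero and finite-sum additivity for φ1T and φ1M'
  have hT0 : φ1T 0 = 0 := by
    have h := hφ1Tadd 0 0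
    rw [add_zero] at h
    exact (left_eq_add.mp h)
  have hM'0 : φ1M' 0 = 0 := by
    have h := hφ1M'add 0 0
    rw [add_zero] at h
    exact (left_eq_add.mp h)
  have hTsum : ∀ (t : Finset (Fin d × Fin ν)) (g : Fin d × Fin ν → M ⊗[S] M'),
      φ1T (∑ q ∈ t, g q) = ∑ q ∈ t, φ1T (g q) := by
    intro t g
    induction t using Finset.induction with
    | empty => simpa using hT0
    | insert _ _ hq ih => rw [Finset.sum_insert hq, Finset.sum_insert hq, hφ1Tadd, ih]
  have hM'sum : ∀ (t : Finset (Fin d × Fin ν)) (g : Fin d × Fin ν → M'),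
      φ1M' (∑ q ∈ t, g q) = ∑ q ∈ t, φ1M' (g q) := by
    intro t g
    induction t using Finset.induction with
    | empty => simpa using hM'0
    | insert _ _ hq ih => rw [Finset.sum_insert hq, Finset.sum_insert hq, hφ1M'add, ih]
  -- scalar facts
  have hcc : (↑c⁻¹ : S) * (c : S) = 1 := Units.inv_mul c
  have hpE : φS E = (p : S) * (c : S) := by rw [hc]; exact (hφ1S E hE).symm
  -- key scalar identity from strong divisibility on M (needs some i with d₁ ≤ i)
  have key : ∀ i : Fin d, d₁ ≤ (i : ℕ) → ∀ t : S, φ1S (E * t) = (c : S) * φS t := by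
    intro i hi t
    have hni1 : ni i = 1 := by rw [hni]; simp [Nat.not_lt.mpr hi]
    have hx : bx i = φ1M (E • e i) := by rw [hbx, hni1, pow_one]
    have h1 : φ1M ((E * t) • e i) = φ1S (E * t) • (c⁻¹ : Sˣ) • φ1M (E • e i) :=
      hφ1Mdiv _ (I.mul_mem_right t hE) _
    have h2 : φ1M ((E * t) • e i) = φS t • φ1M (E • e i) := by
      rw [mul_comm, mul_smul]
      exact hφ1Msemi t _ (hEF1 _)
    have h3 : (φ1S (E * t) * (↑c⁻¹ : S)) • bx i = φS t • bx i := by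
      rw [hx, ← h2, h1, Units.smul_def, smul_smul]
    have h4 : φ1S (E * t) * (↑c⁻¹ : S) = φS t := by
      have h5 := congrArg (fun z => bx.repr z i) h3
      simpa using h5
    have h6 := congrArg (fun z => z * (c : S)) h4
    simp only [mul_assoc, hcc, mul_one] at h6
    rw [h6, mul_comm]
  -- coefficients
  set s : Fin d × Fin ν → S := fun q => (e.tensorProduct w).repr eE q with hs
  have hrep : eE = ∑ q : Fin d × Fin ν, s q • (e q.1 ⊗ₜ[S] w q.2) := by
    conv_lhs => rw [← (e.tensorProduct w).sum_repr eE]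
    refine Finset.sum_congr rfl fun q _ => ?_
    rw [Module.Basis.tensorProduct_apply']
  -- coefficients in the bad range lie in I
  have hF1repr : ∀ x ∈ F1, ∀ i : Fin d, d₁ ≤ (i : ℕ) → e.repr x i ∈ I := by
    intro x hx i hi
    have hle : F1 ≤ Submodule.comap ((Finsupp.lapply i).comp e.repr.toLinearMap) I := by
      rw [hF1]
      apply sup_le
      · rw [Submodule.span_le]
        rintro _ ⟨⟨i₀, hi₀⟩, rfl⟩
        have hne : i₀ ≠ i := by
          intro h; rw [h] at hi₀; omega
        simp [Submodule.mem_comap, Finsupp.single_apply, hne]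
      · refine Submodule.smul_le.mpr fun r hr n _ => ?_
        simp only [Submodule.mem_comap, LinearMap.comp_apply, LinearEquiv.coe_coe,
          map_smul, Finsupp.lapply_apply, Finsupp.smul_apply, smul_eq_mul]
        exact I.mul_mem_right _ hr
    simpa using hle hx
  have hF1'repr : ∀ y ∈ F1', ∀ j : Fin ν, ν₁ ≤ (j : ℕ) → w.repr y j ∈ I := by
    intro y hy j hj
    have hle : F1' ≤ Submodule.comap ((Finsupp.lapply j).comp w.repr.toLinearMap) I := by
      rw [hF1']
      apply sup_le
      · rw [Submodule.span_le]
        rintro _ ⟨⟨j₀, hj₀⟩, rfl⟩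
        have hne : j₀ ≠ j := by
          intro h; rw [h] at hj₀; omega
        simp [Submodule.mem_comap, Finsupp.single_apply, hne]
      · refine Submodule.smul_le.mpr fun r hr n _ => ?_
        simp only [Submodule.mem_comap, LinearMap.comp_apply, LinearEquiv.coe_coe,
          map_smul, Finsupp.lapply_apply, Finsupp.smul_apply, smul_eq_mul]
        exact I.mul_mem_right _ hr
    simpa using hle hy
  have hsI : ∀ i : Fin d, ∀ j : Fin ν, d₁ ≤ (i : ℕ) → ν₁ ≤ (j : ℕ) → s (i, j) ∈ I := by
    intro i j hi hj
    have hle : F12 ≤ Submodule.comap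
        ((Finsupp.lapply ((i, j) : Fin d × Fin ν)).comp (e.tensorProduct w).repr.toLinearMap) I := by
      rw [hF12]
      apply sup_le <;> refine Submodule.map₂_le.mpr fun m hm n hn => ?_
      · simp only [Submodule.mem_comap, LinearMap.comp_apply, LinearEquiv.coe_coe,
          Finsupp.lapply_apply, TensorProduct.mk_apply,
          Module.Basis.tensorProduct_repr_tmul_apply, smul_eq_mul]
        exact I.mul_mem_left _ (hF1repr m hm i hi)
      · simp only [Submodule.mem_comap, LinearMap.comp_apply, LinearEquiv.coe_coe,
          Finsupp.lapply_apply, TensorProduct.mk_apply,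
          Module.Basis.tensorProduct_repr_tmul_apply, smul_eq_mul]
        exact I.mul_mem_right _ (hF1'repr n hn j hj)
    simpa using hle heE
  -- the contraction map
  set Lg : M ⊗[S] M' →ₗ[S] M' :=
    TensorProduct.lift ((LinearMap.lsmul S M').comp (φ1star f)) with hLgdef
  have hLgt : ∀ (x : M) (y : M'), Lg (x ⊗ₜ[S] y) = φ1star f x • y := by
    intro x y; simp [hLgdef]
  -- LHS as a sum
  have hFef : Fe f = ∑ q : Fin d × Fin ν, (s q * f (e q.1)) • w q.2 := by
    rw [hFe]
    simp [LinearMap.sum_apply, LinearMap.smul_apply, LinearMap.smulRight_apply,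
      LinearMap.applyₗ_apply_apply, smul_smul]
    rfl
  -- RHS as a sum
  have hFeg : Fe (φ1star f) = ∑ q : Fin d × Fin ν, Lg (φ1T (s q • (e q.1 ⊗ₜ[S] w q.2))) := by
    have h1 : Fe (φ1star f) = Lg eE := by
      rw [hFe]
      conv_rhs => rw [hrep]
      rw [map_sum]
      simp [LinearMap.sum_apply, LinearMap.smul_apply, LinearMap.smulRight_apply,
        LinearMap.applyₗ_apply_apply, hLgt, map_smul]
      rfl
    rw [h1]
    conv_lhs => rw [← hfix, hrep]
    rw [hTsum, map_sum]
  rw [hFef, hFeg, hM'sum]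
  refine Finset.sum_congr rfl fun q _ => ?_
  obtain ⟨i, j⟩ := q
  simp only
  set s0 : S := s (i, j) with hs0
  set t : S := f (e i) with ht
  -- common rewriting of the tensor term
  have htm : s0 • (e i ⊗ₜ[S] w j) = (s0 • e i) ⊗ₜ[S] w j := TensorProduct.smul_tmul' s0 _ _
  by_cases hi : (i : ℕ) < d₁ <;> by_cases hj : (j : ℕ) < ν₁
  · -- Case A : i < d₁, j < ν₁
    have hni0 : ni i = 0 := by rw [hni]; simp [hi]
    have hmj0 : mj j = 0 := by rw [hmj]; simp [hj]
    have hxi : bx i = φ1M (e i) := by rw [hbx, hni0, pow_zero, one_smul]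
    have hyj : by' j = φ1M' (w j) := by rw [hby, hmj0, pow_zero, one_smul]
    have hgx : φ1star f (bx i) = φ1S t := by
      rw [hstar, hni0, pow_zero, one_mul]
    have hEwj : φ1M' (E • w j) = ((p : S) * (c : S)) • by' j := by
      rw [hφ1M'semi E _ (hwF1' j hj), hpE, hyj]
    have hRHS : φ1T ((s0 • e i) ⊗ₜ[S] w j)
        = (φS s0 • bx i) ⊗ₜ[S] (((↑c⁻¹ : S) * ((p : S) * (c : S))) • by' j) := by
      rw [hφ1T₁ _ _ (F1.smul_mem s0 (heF1 i hi)), hφ1Msemi s0 _ (heF1 i hi), hEwj,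
        Units.smul_def, smul_smul, hxi]
    rw [htm, hRHS, hLgt]
    rw [map_smul, hgx]
    rw [hφ1M'semi _ _ (hwF1' j hj), ← hyj]
    simp only [smul_smul, smul_eq_mul]
    congr 1
    have hpt := hφ1S t (hfI i hi)
    rw [map_mul]
    push_cast
    linear_combination (-(φS s0 * φ1S t * (p : S))) * hcc - φS s0 * hpt
  · -- Case B : i < d₁, j ≥ ν₁
    have hjge : ν₁ ≤ (j : ℕ) := Nat.not_lt.mp hj
    have hni0 : ni i = 0 := by rw [hni]; simp [hi]
    have hmj1 : mj j = 1 := by rw [hmj]; simp [Nat.not_lt.mpr hjge]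
    have hxi : bx i = φ1M (e i) := by rw [hbx, hni0, pow_zero, one_smul]
    have hyj : by' j = φ1M' (E • w j) := by rw [hby, hmj1, pow_one]
    have hgx : φ1star f (bx i) = φ1S t := by
      rw [hstar, hni0, pow_zero, one_mul]
    have htI : t ∈ I := hfI i hi
    have hRHS : φ1T ((s0 • e i) ⊗ₜ[S] w j)
        = (φS s0 • bx i) ⊗ₜ[S] ((↑c⁻¹ : S) • by' j) := by
      rw [hφ1T₁ _ _ (F1.smul_mem s0 (heF1 i hi)), hφ1Msemi s0 _ (heF1 i hi),
        Units.smul_def, hxi, hyj]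
    rw [htm, hRHS, hLgt]
    rw [map_smul, hgx]
    -- LHS
    rw [mul_smul, hφ1M'semi s0 _ (hIF1' t htI (w j)), hφ1M'div t htI,
      Units.smul_def, ← hyj]
    simp only [smul_smul, smul_eq_mul]
    congr 1
    ring
  · -- Case C : i ≥ d₁, j < ν₁
    have hige : d₁ ≤ (i : ℕ) := Nat.not_lt.mp hi
    have hni1 : ni i = 1 := by rw [hni]; simp [Nat.not_lt.mpr hige]
    have hmj0 : mj j = 0 := by rw [hmj]; simp [hj]
    have hxi : bx i = φ1M (E • e i) := by rw [hbx, hni1, pow_one]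
    have hyj : by' j = φ1M' (w j) := by rw [hby, hmj0, pow_zero, one_smul]
    have hgx : φ1star f (bx i) = (c : S) * φS t := by
      rw [hstar, hni1, pow_one, key i hige t]
    have hRHS : φ1T ((s0 • e i) ⊗ₜ[S] w j)
        = (((↑c⁻¹ : S) * φS s0) • bx i) ⊗ₜ[S] by' j := by
      rw [hφ1T₂ _ _ (hwF1' j hj)]
      rw [smul_comm E s0 (e i), hφ1Msemi s0 _ (hEF1 (e i)), Units.smul_def,
        smul_smul, hxi, hyj]
    rw [htm, hRHS, hLgt]
    rw [map_smul, hgx]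
    rw [hφ1M'semi _ _ (hwF1' j hj), ← hyj]
    simp only [smul_smul, smul_eq_mul]
    congr 1
    rw [map_mul]
    linear_combination (-(φS s0 * φS t)) * hcc
  · -- Case D : i ≥ d₁, j ≥ ν₁
    have hige : d₁ ≤ (i : ℕ) := Nat.not_lt.mp hi
    have hjge : ν₁ ≤ (j : ℕ) := Nat.not_lt.mp hj
    have hni1 : ni i = 1 := by rw [hni]; simp [Nat.not_lt.mpr hige]
    have hmj1 : mj j = 1 := by rw [hmj]; simp [Nat.not_lt.mpr hjge]
    have hxi : bx i = φ1M (E • e i) := by rw [hbx, hni1, pow_one]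
    have hyj : by' j = φ1M' (E • w j) := by rw [hby, hmj1, pow_one]
    have hgx : φ1star f (bx i) = (c : S) * φS t := by
      rw [hstar, hni1, pow_one, key i hige t]
    have hs0I : s0 ∈ I := hsI i j hige hjge
    have hRHS : φ1T ((s0 • e i) ⊗ₜ[S] w j)
        = ((φ1S s0 * (↑c⁻¹ : S)) • bx i) ⊗ₜ[S] ((↑c⁻¹ : S) • by' j) := by
      rw [hφ1T₁ _ _ (hIF1 s0 hs0I (e i)), hφ1Mdiv s0 hs0I, Units.smul_def,
        Units.smul_def, smul_smul, hxi, hyj]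
    rw [htm, hRHS, hLgt]
    rw [map_smul, hgx]
    -- LHS
    rw [mul_comm s0 t, mul_smul, hφ1M'semi t _ (hIF1' s0 hs0I (w j)),
      hφ1M'div s0 hs0I, Units.smul_def, ← hyj]
    simp only [smul_smul, smul_eq_mul]
    congr 1
    linear_combination (-(φ1S s0 * (↑c⁻¹ : S) * φS t)) * hcc
end
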